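/- (Time Complexity Stability, part i) For a computable dynamical system S with initial state M₀ and environment E, there exists a constant c depending on S, E and M₀ but not on t, such that for every t, if t is the first time at which state M_t is reached, then |K(M_t) − K(t)| ≤ c. -/

import Mathlib

/-- Time Complexity Stability, part i: For a computable dynamical
system with state function `state : t ↦ S(M₀,E,t)`, there is a constant `c`
(depending on the system, environment and initial state but not on `t`) such that
whenever `t` is the first time at which the state `state t` is reached,
`|K (state t) - K t| ≤ c`.  Hypotheses: `hK1` invariance for computable functions
(the simulation bound), `hK2` invariance for partial computable functions (the
exhaustive-search bound recovering `t` from `state t`). -/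
theorem time_complexity_stability_i
    (K : ℕ → ℕ) (state : ℕ → ℕ) (hstate : Computable state)
    (hK1 : ∀ f : ℕ → ℕ, Computable f → ∃ c : ℕ, ∀ t, K (f t) ≤ K t + c)
    (hK2 : ∀ f : ℕ →. ℕ, Partrec f → ∃ c : ℕ, ∀ x y, y ∈ f x → K y ≤ K x + c) :
    ∃ c : ℕ, ∀ t : ℕ, (∀ s < t, state s ≠ state t) →
      K (state t) ≤ K t + c ∧ K t ≤ K (state t) + c := by
  obtain ⟨c1, hc1⟩ := hK1 state hstate
  have hf : Partrec fun x => Nat.rfind fun n => Part.some (decide (state n = x)) := by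
    apply Partrec.rfind
    have hc : Computable₂ fun (x n : ℕ) => decide (state n = x) :=
      (Primrec₂.to_comp Primrec.eq.decide).comp (hstate.comp Computable.snd) Computable.fst
    exact hc.partrec₂
  obtain ⟨c2, hc2⟩ := hK2 _ hf
  refine ⟨max c1 c2, fun t ht => ⟨(hc1 t).trans (by simp [le_max_left]), ?_⟩⟩
  have : t ∈ Nat.rfind fun n => Part.some (decide (state n = state t)) := by
    apply Nat.mem_rfind.mpr
    constructor
    · simp
    · intro m hm
      simp [ht m hm]
  exact (hc2 _ _ this).trans (by simp [le_max_right])
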